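/- Let S be a finite set, and suppose B□ᵢC ≤ G and D□ⱼF ≤ G are strong shuffles in M̂ₙ(S) (so |B| ⊔ |C| = S = |D| ⊔ |F|, G−|C| = B, G−|B| = C, G−|F| = D, G−|D| = F), with i ≤ j. Set X₁ = D−|C|, X₂ = F−|C|, X₃ = D−|B|, X₄ = F−|B|. Then: (a) D−|C| = B−|F|, F−|C| = B−|D|, D−|B| = C−|F|, and F−|B| = C−|D|; (b) (X₁□ⱼX₂)□ᵢ(X₃□ⱼX₄) ≤ B□ᵢC and (X₁□ᵢX₃)□ⱼ(X₂□ᵢX₄) ≤ D□ⱼF in M̂ₙ(S); (c) if moreover i < j, then (X₁□ⱼX₂)□ᵢ(X₃□ⱼX₄) ≤ (X₁□ᵢX₃)□ⱼ(X₂□ᵢX₄), so the extended diagram can be completed into a commutative triangle. -/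

import Mathlib

/-- Formal `(n, Fin k)`-expressions: binary trees whose leaves are labeled by
generators and whose internal nodes are labeled by one of the `n` operations.
Expressions are considered up to the strict associativity of each operation,
via the relation `W.equiv` below. -/
inductive W (n k : ℕ) : Type
  | leaf : Fin k → W n k
  | node : Fin n → W n k → W n k → W n k

namespace W

variable {n k : ℕ}

/-- The list of leaf labels, from left to right. -/
def leaves : W n k → List (Fin k)
  | leaf a => [a]
  | node _ A B => A.leaves ++ B.leaves

/-- `A.Exact T`: the expression `A` uses each element of `T` exactly once and
no other generators. -/
def Exact (A : W n k) (T : Finset (Fin k)) : Prop :=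
  A.leaves.Nodup ∧ A.leaves.toFinset = T

/-- `A.inRel a b i` means `a □ᵢ b` in `A`: the lowest common "ancestor" node of the
leaves `a` and `b` carries the operation `i`, with `a` to the left of `b`. -/
def inRel : W n k → Fin k → Fin k → Fin n → Prop
  | leaf _, _, _, _ => False
  | node j A B, a, b, i => A.inRel a b i ∨ B.inRel a b i ∨ (j = i ∧ a ∈ A.leaves ∧ b ∈ B.leaves)

/-- The order relation of the poset `M̂ₙ`: `A ≤ B` iff whenever `a □ᵢ b` in `A`,
either `a □ⱼ b` in `B` for some `j ≥ i`, or `b □ⱼ a` in `B` for some `j > i`. -/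
def le (A B : W n k) : Prop :=
  ∀ a b : Fin k, a ≠ b → ∀ i : Fin n, A.inRel a b i →
    ∃ j : Fin n, (i ≤ j ∧ B.inRel a b j) ∨ (i < j ∧ B.inRel b a j)

/-- One step of the associativity/congruence relation on expressions. -/
inductive Step : W n k → W n k → Prop
  | assoc (i : Fin n) (A B C : W n k) :
      Step (node i (node i A B) C) (node i A (node i B C))
  | congr_left (i : Fin n) {A A' : W n k} (B : W n k) :
      Step A A' → Step (node i A B) (node i A' B)
  | congr_right (i : Fin n) (A : W n k) {B B' : W n k} :
      Step B B' → Step (node i A B) (node i A B')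

/-- Equality of expressions (strict associativity of each operation). -/
def equiv (A B : W n k) : Prop := Relation.EqvGen Step A B

/-- Restriction of an expression to the leaves satisfying `p`
(`none` if no leaf survives). -/
def restrict : W n k → (Fin k → Bool) → Option (W n k)
  | leaf a, p => if p a then some (leaf a) else none
  | node i A B, p =>
    match A.restrict p, B.restrict p with
    | some A', some B' => some (node i A' B')
    | some A', none => some A'
    | none, o => o

end W

/-- Joining two possibly-empty expressions by the operation `i`, with the convention
that the empty expression is a unit. -/
def onode {n k : ℕ} (i : Fin n) : Option (W n k) → Option (W n k) → Option (W n k)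
  | some A, some B => some (W.node i A B)
  | some A, none => some A
  | none, o => o

/-- Equality of possibly-empty expressions. -/
def OEquiv {n k : ℕ} : Option (W n k) → Option (W n k) → Prop
  | none, none => True
  | some A, some B => A.equiv B
  | _, _ => False

/-- `A − T`: the expression `A` with the leaves belonging to `T` deleted. -/
def diffR {n k : ℕ} (A : W n k) (T : Finset (Fin k)) : Option (W n k) :=
  A.restrict fun a => decide (a ∉ T)


/-! ### Auxiliary lemmas -/

namespace W

variable {n k : ℕ}

theorem leaves_ne_nil (A : W n k) : A.leaves ≠ [] := by
  induction A with
  | leaf a => simp [leaves]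
  | node i A B ihA ihB => simp [leaves, ihA]

/-- Leaves of a possibly-empty expression. -/
def oleaves : Option (W n k) → List (Fin k)
  | none => []
  | some A => A.leaves

/-- `inRel` for possibly-empty expressions. -/
def oInRel : Option (W n k) → Fin k → Fin k → Fin n → Prop
  | none, _, _, _ => False
  | some A, a, b, l => A.inRel a b l

/-- Restriction of a possibly-empty expression. -/
def orestrict (o : Option (W n k)) (p : Fin k → Bool) : Option (W n k) :=
  o.bind fun A => A.restrict p

theorem restrict_node (m : Fin n) (A B : W n k) (p : Fin k → Bool) :
    (node m A B).restrict p = onode m (A.restrict p) (B.restrict p) := by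
  cases hA : A.restrict p <;> cases hB : B.restrict p <;> simp [restrict, onode, hA, hB]

theorem onode_none_right (m : Fin n) (o : Option (W n k)) : onode m o none = o := by
  cases o <;> rfl

theorem onode_none_left (m : Fin n) (o : Option (W n k)) : onode m none o = o := rfl

theorem onode_eq_none_iff (m : Fin n) (o₁ o₂ : Option (W n k)) :
    onode m o₁ o₂ = none ↔ o₁ = none ∧ o₂ = none := by
  cases o₁ <;> cases o₂ <;> simp [onode]

theorem oleaves_onode (m : Fin n) (o₁ o₂ : Option (W n k)) :
    oleaves (onode m o₁ o₂) = oleaves o₁ ++ oleaves o₂ := by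
  cases o₁ <;> cases o₂ <;> simp [onode, oleaves, leaves]

theorem oInRel_onode (m : Fin n) (o₁ o₂ : Option (W n k)) (a b : Fin k) (l : Fin n) :
    oInRel (onode m o₁ o₂) a b l ↔
      oInRel o₁ a b l ∨ oInRel o₂ a b l ∨ (m = l ∧ a ∈ oleaves o₁ ∧ b ∈ oleaves o₂) := by
  cases o₁ <;> cases o₂ <;> simp [onode, oInRel, oleaves, inRel]

theorem oleaves_restrict (A : W n k) (p : Fin k → Bool) :
    oleaves (A.restrict p) = A.leaves.filter p := by
  induction A with
  | leaf a => by_cases h : p a <;> simp [restrict, oleaves, leaves, h]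
  | node m A B ihA ihB =>
      rw [restrict_node, oleaves_onode, ihA, ihB]
      simp [leaves, List.filter_append]

theorem restrict_isSome (A : W n k) (p : Fin k → Bool) (a : Fin k)
    (ha : a ∈ A.leaves) (hpa : p a = true) : ∃ A', A.restrict p = some A' := by
  cases h : A.restrict p with
  | some A' => exact ⟨A', rfl⟩
  | none =>
      exfalso
      have hmem : a ∈ A.leaves.filter p := List.mem_filter.mpr ⟨ha, hpa⟩
      rw [← oleaves_restrict, h] at hmem
      simp [oleaves] at hmem

theorem inRel_restrict_up (A : W n k) (p : Fin k → Bool) :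
    ∀ a b (l : Fin n), oInRel (A.restrict p) a b l → A.inRel a b l := by
  induction A with
  | leaf c =>
      intro a b l h
      by_cases hc : p c <;> simp [restrict, hc, oInRel, inRel] at h
  | node m A B ihA ihB =>
      intro a b l h
      rw [restrict_node, oInRel_onode] at h
      rcases h with h | h | ⟨rfl, ha, hb⟩
      · exact Or.inl (ihA a b l h)
      · exact Or.inr (Or.inl (ihB a b l h))
      · refine Or.inr (Or.inr ⟨rfl, ?_, ?_⟩)
        · rw [oleaves_restrict] at ha; exact (List.mem_filter.mp ha).1
        · rw [oleaves_restrict] at hb; exact (List.mem_filter.mp hb).1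

theorem inRel_restrict_down (A : W n k) (p : Fin k → Bool) :
    ∀ a b (l : Fin n), A.inRel a b l → p a = true → p b = true →
      oInRel (A.restrict p) a b l := by
  induction A with
  | leaf c => intro a b l h _ _; exact h.elim
  | node m A B ihA ihB =>
      intro a b l h hpa hpb
      rw [restrict_node, oInRel_onode]
      rcases h with h | h | ⟨rfl, ha, hb⟩
      · exact Or.inl (ihA a b l h hpa hpb)
      · exact Or.inr (Or.inl (ihB a b l h hpa hpb))
      · exact Or.inr (Or.inr ⟨rfl,
          by rw [oleaves_restrict]; exact List.mem_filter.mpr ⟨ha, hpa⟩,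
          by rw [oleaves_restrict]; exact List.mem_filter.mpr ⟨hb, hpb⟩⟩)

theorem leaves_step {A B : W n k} (h : Step A B) : A.leaves = B.leaves := by
  induction h <;> simp_all [leaves, List.append_assoc]

theorem inRel_step {A B : W n k} (h : Step A B) (a b : Fin k) (l : Fin n) :
    A.inRel a b l ↔ B.inRel a b l := by
  induction h with
  | assoc m X Y Z => simp only [inRel, leaves, List.mem_append]; tauto
  | congr_left m Y hs ih => simp only [inRel, leaves_step hs, ih]
  | congr_right m X hs ih => simp only [inRel, leaves_step hs, ih]

theorem equiv_refl (A : W n k) : A.equiv A := Relation.EqvGen.refl A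

theorem equiv_symm {A B : W n k} (h : A.equiv B) : B.equiv A :=
  Relation.EqvGen.symm _ _ h

theorem equiv_trans {A B C : W n k} (h₁ : A.equiv B) (h₂ : B.equiv C) : A.equiv C :=
  Relation.EqvGen.trans _ _ _ h₁ h₂

theorem leaves_equiv {A B : W n k} (h : A.equiv B) : A.leaves = B.leaves := by
  induction h with
  | rel _ _ hs => exact leaves_step hs
  | refl _ => rfl
  | symm _ _ _ ih => exact ih.symm
  | trans _ _ _ _ _ ih₁ ih₂ => exact ih₁.trans ih₂

theorem inRel_equiv {A B : W n k} (h : A.equiv B) (a b : Fin k) (l : Fin n) :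
    A.inRel a b l ↔ B.inRel a b l := by
  induction h with
  | rel _ _ hs => exact inRel_step hs a b l
  | refl _ => exact Iff.rfl
  | symm _ _ _ ih => exact ih.symm
  | trans _ _ _ _ _ ih₁ ih₂ => exact ih₁.trans ih₂

theorem equiv_node_left (m : Fin n) {A A' : W n k} (B : W n k) (h : A.equiv A') :
    (node m A B).equiv (node m A' B) := by
  induction h with
  | rel _ _ hs => exact Relation.EqvGen.rel _ _ (Step.congr_left m B hs)
  | refl _ => exact equiv_refl _
  | symm _ _ _ ih => exact equiv_symm ih
  | trans _ _ _ _ _ ih₁ ih₂ => exact equiv_trans ih₁ ih₂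

theorem equiv_node_right (m : Fin n) (A : W n k) {B B' : W n k} (h : B.equiv B') :
    (node m A B).equiv (node m A B') := by
  induction h with
  | rel _ _ hs => exact Relation.EqvGen.rel _ _ (Step.congr_right m A hs)
  | refl _ => exact equiv_refl _
  | symm _ _ _ ih => exact equiv_symm ih
  | trans _ _ _ _ _ ih₁ ih₂ => exact equiv_trans ih₁ ih₂

theorem equiv_node (m : Fin n) {A A' B B' : W n k} (hA : A.equiv A') (hB : B.equiv B') :
    (node m A B).equiv (node m A' B') :=
  equiv_trans (equiv_node_left m B hA) (equiv_node_right m A' hB)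

theorem oequiv_refl (o : Option (W n k)) : OEquiv o o := by
  cases o
  · trivial
  · exact equiv_refl _

theorem oequiv_symm {o₁ o₂ : Option (W n k)} (h : OEquiv o₁ o₂) : OEquiv o₂ o₁ := by
  cases o₁ <;> cases o₂ <;> first | trivial | exact h.elim | exact equiv_symm h

theorem oequiv_trans {o₁ o₂ o₃ : Option (W n k)} (h₁ : OEquiv o₁ o₂) (h₂ : OEquiv o₂ o₃) :
    OEquiv o₁ o₃ := by
  cases o₁ <;> cases o₂ <;> cases o₃ <;>
    first | trivial | exact h₁.elim | exact h₂.elim | exact equiv_trans h₁ h₂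

theorem oInRel_oequiv {o₁ o₂ : Option (W n k)} (h : OEquiv o₁ o₂) (a b : Fin k) (l : Fin n) :
    oInRel o₁ a b l ↔ oInRel o₂ a b l := by
  cases o₁ <;> cases o₂ <;> first | exact Iff.rfl | exact h.elim | exact inRel_equiv h a b l

theorem onode_congr (m : Fin n) {o₁ o₁' o₂ o₂' : Option (W n k)}
    (h₁ : OEquiv o₁ o₁') (h₂ : OEquiv o₂ o₂') :
    OEquiv (onode m o₁ o₂) (onode m o₁' o₂') := by
  cases o₁ <;> cases o₁' <;> cases o₂ <;> cases o₂' <;>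
    first
    | exact h₁.elim
    | exact h₂.elim
    | trivial
    | exact h₁
    | exact h₂
    | exact equiv_node m h₁ h₂

theorem onode_assoc (m : Fin n) (o₁ o₂ o₃ : Option (W n k)) :
    OEquiv (onode m (onode m o₁ o₂) o₃) (onode m o₁ (onode m o₂ o₃)) := by
  cases o₁ <;> cases o₂ <;> cases o₃ <;>
    first | exact oequiv_refl _ | exact Relation.EqvGen.rel _ _ (Step.assoc m _ _ _)

theorem restrict_step {A B : W n k} (h : Step A B) (p : Fin k → Bool) :
    OEquiv (A.restrict p) (B.restrict p) := by
  induction h with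
  | assoc m X Y Z =>
      rw [restrict_node, restrict_node, restrict_node, restrict_node]
      exact onode_assoc m _ _ _
  | congr_left m Y hs ih =>
      rw [restrict_node, restrict_node]
      exact onode_congr m ih (oequiv_refl _)
  | congr_right m X hs ih =>
      rw [restrict_node, restrict_node]
      exact onode_congr m (oequiv_refl _) ih

theorem restrict_equiv {A B : W n k} (h : A.equiv B) (p : Fin k → Bool) :
    OEquiv (A.restrict p) (B.restrict p) := by
  induction h with
  | rel _ _ hs => exact restrict_step hs p
  | refl _ => exact oequiv_refl _
  | symm _ _ _ ih => exact oequiv_symm ih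
  | trans _ _ _ _ _ ih₁ ih₂ => exact oequiv_trans ih₁ ih₂

theorem orestrict_some (A : W n k) (p : Fin k → Bool) :
    orestrict (some A) p = A.restrict p := rfl

theorem orestrict_onode (m : Fin n) (o₁ o₂ : Option (W n k)) (p : Fin k → Bool) :
    orestrict (onode m o₁ o₂) p = onode m (orestrict o₁ p) (orestrict o₂ p) := by
  cases o₁ with
  | none => rfl
  | some A =>
      cases o₂ with
      | none => exact (onode_none_right m (A.restrict p)).symm
      | some B => exact restrict_node m A B p

theorem restrict_restrict (A : W n k) (p q : Fin k → Bool) :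
    orestrict (A.restrict p) q = A.restrict fun a => p a && q a := by
  induction A with
  | leaf c => by_cases h : p c <;> by_cases h' : q c <;> simp [restrict, orestrict, h, h']
  | node m A B ihA ihB => rw [restrict_node, orestrict_onode, ihA, ihB, restrict_node]

theorem diffR_def (A : W n k) (T : Finset (Fin k)) :
    diffR A T = A.restrict fun a => decide (a ∉ T) := rfl

end W

/-- STATEMENT 15: given two strong shuffles `B □ᵢ C ≤ G` and `D □ⱼ F ≤ G`
(with `i ≤ j`), setting `X₁ = D−|C|`, `X₂ = F−|C|`, `X₃ = D−|B|`, `X₄ = F−|B|`: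
(a) the four difference identities hold;
(b) `(X₁□ⱼX₂)□ᵢ(X₃□ⱼX₄) ≤ B□ᵢC` and `(X₁□ᵢX₃)□ⱼ(X₂□ᵢX₄) ≤ D□ⱼF`;
(c) if `i < j`, the extended diagram closes to a commutative triangle:
    `(X₁□ⱼX₂)□ᵢ(X₃□ⱼX₄) ≤ (X₁□ᵢX₃)□ⱼ(X₂□ᵢX₄)`. -/
theorem extending_diagram (n k : ℕ) (hn : 1 ≤ n) (i j : Fin n) (hij : i ≤ j)
    (S SB SC SD SF : Finset (Fin k)) (B C D F G : W n k)
    (hB : B.Exact SB) (hC : C.Exact SC) (hD : D.Exact SD) (hF : F.Exact SF)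
    (hG : G.Exact S)
    (hBC : Disjoint SB SC) (hBCu : SB ∪ SC = S)
    (hDF : Disjoint SD SF) (hDFu : SD ∪ SF = S)
    (hφ : (W.node i B C).le G) (hψ : (W.node j D F).le G)
    (hφ₁ : OEquiv (diffR G SC) (some B)) (hφ₂ : OEquiv (diffR G SB) (some C))
    (hψ₁ : OEquiv (diffR G SF) (some D)) (hψ₂ : OEquiv (diffR G SD) (some F)) :
    (OEquiv (diffR D SC) (diffR B SF) ∧ OEquiv (diffR F SC) (diffR B SD) ∧
     OEquiv (diffR D SB) (diffR C SF) ∧ OEquiv (diffR F SB) (diffR C SD)) ∧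
    (∃ Z : W n k,
      onode i (onode j (diffR D SC) (diffR F SC)) (onode j (diffR D SB) (diffR F SB))
        = some Z ∧ Z.le (W.node i B C)) ∧
    (∃ Z' : W n k,
      onode j (onode i (diffR D SC) (diffR D SB)) (onode i (diffR F SC) (diffR F SB))
        = some Z' ∧ Z'.le (W.node j D F)) ∧
    (i < j → ∀ Z Z' : W n k,
      onode i (onode j (diffR D SC) (diffR F SC)) (onode j (diffR D SB) (diffR F SB))
        = some Z →
      onode j (onode i (diffR D SC) (diffR D SB)) (onode i (diffR F SC) (diffR F SB))
        = some Z' →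
      Z.le Z') := by
  
  classical
  -- membership translations
  have memB : ∀ a : Fin k, a ∈ B.leaves ↔ a ∈ SB := fun a => by
    rw [← hB.2, List.mem_toFinset]
  have memC : ∀ a : Fin k, a ∈ C.leaves ↔ a ∈ SC := fun a => by
    rw [← hC.2, List.mem_toFinset]
  have memD : ∀ a : Fin k, a ∈ D.leaves ↔ a ∈ SD := fun a => by
    rw [← hD.2, List.mem_toFinset]
  have memF : ∀ a : Fin k, a ∈ F.leaves ↔ a ∈ SF := fun a => by
    rw [← hF.2, List.mem_toFinset]
  have hSDS : SD ⊆ S := hDFu ▸ Finset.subset_union_left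
  have hSFS : SF ⊆ S := hDFu ▸ Finset.subset_union_right
  have hBnC : ∀ a : Fin k, a ∈ SB → a ∉ SC := fun a ha => Finset.disjoint_left.mp hBC ha
  have hCnB : ∀ a : Fin k, a ∈ SC → a ∉ SB := fun a ha => Finset.disjoint_right.mp hBC ha
  have hDnF : ∀ a : Fin k, a ∈ SD → a ∉ SF := fun a ha => Finset.disjoint_left.mp hDF ha
  have hFnD : ∀ a : Fin k, a ∈ SF → a ∉ SD := fun a ha => Finset.disjoint_right.mp hDF ha
  have hSinB : ∀ a : Fin k, a ∈ S → a ∉ SC → a ∈ SB := by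
    intro a haS haC
    have h' : a ∈ SB ∪ SC := by rw [hBCu]; exact haS
    rcases Finset.mem_union.mp h' with h | h
    · exact h
    · exact absurd h haC
  have hSinC : ∀ a : Fin k, a ∈ S → a ∉ SB → a ∈ SC := by
    intro a haS haB
    have h' : a ∈ SB ∪ SC := by rw [hBCu]; exact haS
    rcases Finset.mem_union.mp h' with h | h
    · exact absurd h haB
    · exact h
  -- part (a)
  have diff_diff : ∀ (A : W n k) (T U : Finset (Fin k)), OEquiv (diffR G T) (some A) →
      OEquiv (diffR A U) (G.restrict fun a => decide (a ∉ T) && decide (a ∉ U)) := by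
    intro A T U h
    rw [W.diffR_def] at h
    rcases hGT : G.restrict (fun a => decide (a ∉ T)) with _ | A₀
    · rw [hGT] at h; exact h.elim
    · rw [hGT] at h
      have h1 : OEquiv (A.restrict fun a => decide (a ∉ U))
          (A₀.restrict fun a => decide (a ∉ U)) := W.restrict_equiv (W.equiv_symm h) _
      have h2 := W.restrict_restrict G (fun a => decide (a ∉ T)) (fun a => decide (a ∉ U))
      rw [hGT, W.orestrict_some] at h2
      rw [W.diffR_def, ← h2]
      exact h1
  have eDC : OEquiv (diffR D SC) (diffR B SF) := by
    have e1 := diff_diff D SF SC hψ₁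
    have e2 := diff_diff B SC SF hφ₁
    have hpq : (fun a : Fin k => decide (a ∉ SC) && decide (a ∉ SF))
        = fun a : Fin k => decide (a ∉ SF) && decide (a ∉ SC) :=
      funext fun a => Bool.and_comm _ _
    rw [hpq] at e2
    exact W.oequiv_trans e1 (W.oequiv_symm e2)
  have eFC : OEquiv (diffR F SC) (diffR B SD) := by
    have e1 := diff_diff F SD SC hψ₂
    have e2 := diff_diff B SC SD hφ₁
    have hpq : (fun a : Fin k => decide (a ∉ SC) && decide (a ∉ SD))
        = fun a : Fin k => decide (a ∉ SD) && decide (a ∉ SC) :=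
      funext fun a => Bool.and_comm _ _
    rw [hpq] at e2
    exact W.oequiv_trans e1 (W.oequiv_symm e2)
  have eDB : OEquiv (diffR D SB) (diffR C SF) := by
    have e1 := diff_diff D SF SB hψ₁
    have e2 := diff_diff C SB SF hφ₂
    have hpq : (fun a : Fin k => decide (a ∉ SB) && decide (a ∉ SF))
        = fun a : Fin k => decide (a ∉ SF) && decide (a ∉ SB) :=
      funext fun a => Bool.and_comm _ _
    rw [hpq] at e2
    exact W.oequiv_trans e1 (W.oequiv_symm e2)
  have eFB : OEquiv (diffR F SB) (diffR C SD) := by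
    have e1 := diff_diff F SD SB hψ₂
    have e2 := diff_diff C SB SD hφ₂
    have hpq : (fun a : Fin k => decide (a ∉ SB) && decide (a ∉ SD))
        = fun a : Fin k => decide (a ∉ SD) && decide (a ∉ SB) :=
      funext fun a => Bool.and_comm _ _
    rw [hpq] at e2
    exact W.oequiv_trans e1 (W.oequiv_symm e2)
  -- support of the pieces
  have olDC : ∀ a : Fin k, a ∈ W.oleaves (diffR D SC) → a ∈ SD ∧ a ∈ SB := by
    intro a ha
    rw [W.diffR_def, W.oleaves_restrict, List.mem_filter] at ha
    have haD : a ∈ SD := (memD a).mp ha.1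
    exact ⟨haD, hSinB a (hSDS haD) (of_decide_eq_true ha.2)⟩
  have olFC : ∀ a : Fin k, a ∈ W.oleaves (diffR F SC) → a ∈ SF ∧ a ∈ SB := by
    intro a ha
    rw [W.diffR_def, W.oleaves_restrict, List.mem_filter] at ha
    have haF : a ∈ SF := (memF a).mp ha.1
    exact ⟨haF, hSinB a (hSFS haF) (of_decide_eq_true ha.2)⟩
  have olDB : ∀ a : Fin k, a ∈ W.oleaves (diffR D SB) → a ∈ SD ∧ a ∈ SC := by
    intro a ha
    rw [W.diffR_def, W.oleaves_restrict, List.mem_filter] at ha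
    have haD : a ∈ SD := (memD a).mp ha.1
    exact ⟨haD, hSinC a (hSDS haD) (of_decide_eq_true ha.2)⟩
  have olFB : ∀ a : Fin k, a ∈ W.oleaves (diffR F SB) → a ∈ SF ∧ a ∈ SC := by
    intro a ha
    rw [W.diffR_def, W.oleaves_restrict, List.mem_filter] at ha
    have haF : a ∈ SF := (memF a).mp ha.1
    exact ⟨haF, hSinC a (hSFS haF) (of_decide_eq_true ha.2)⟩
  -- relation transfers: up to D, F
  have upDC : ∀ a b (l : Fin n), W.oInRel (diffR D SC) a b l → D.inRel a b l := by
    intro a b l h; rw [W.diffR_def] at h; exact W.inRel_restrict_up D _ a b l h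
  have upDB : ∀ a b (l : Fin n), W.oInRel (diffR D SB) a b l → D.inRel a b l := by
    intro a b l h; rw [W.diffR_def] at h; exact W.inRel_restrict_up D _ a b l h
  have upFC : ∀ a b (l : Fin n), W.oInRel (diffR F SC) a b l → F.inRel a b l := by
    intro a b l h; rw [W.diffR_def] at h; exact W.inRel_restrict_up F _ a b l h
  have upFB : ∀ a b (l : Fin n), W.oInRel (diffR F SB) a b l → F.inRel a b l := by
    intro a b l h; rw [W.diffR_def] at h; exact W.inRel_restrict_up F _ a b l h
  -- relation transfers: to B, C via part (a)
  have tDC_B : ∀ a b (l : Fin n), W.oInRel (diffR D SC) a b l → B.inRel a b l := by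
    intro a b l h
    have h' := (W.oInRel_oequiv eDC a b l).mp h
    rw [W.diffR_def] at h'
    exact W.inRel_restrict_up B _ a b l h'
  have tFC_B : ∀ a b (l : Fin n), W.oInRel (diffR F SC) a b l → B.inRel a b l := by
    intro a b l h
    have h' := (W.oInRel_oequiv eFC a b l).mp h
    rw [W.diffR_def] at h'
    exact W.inRel_restrict_up B _ a b l h'
  have tDB_C : ∀ a b (l : Fin n), W.oInRel (diffR D SB) a b l → C.inRel a b l := by
    intro a b l h
    have h' := (W.oInRel_oequiv eDB a b l).mp h
    rw [W.diffR_def] at h'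
    exact W.inRel_restrict_up C _ a b l h'
  have tFB_C : ∀ a b (l : Fin n), W.oInRel (diffR F SB) a b l → C.inRel a b l := by
    intro a b l h
    have h' := (W.oInRel_oequiv eFB a b l).mp h
    rw [W.diffR_def] at h'
    exact W.inRel_restrict_up C _ a b l h'
  -- relation transfers: from G down to B, C, D, F
  have tG_B : ∀ a b (l : Fin n), a ∈ SB → b ∈ SB → G.inRel a b l → B.inRel a b l := by
    intro a b l ha hb h
    have h' := W.inRel_restrict_down G (fun x => decide (x ∉ SC)) a b l h
      (decide_eq_true (hBnC a ha)) (decide_eq_true (hBnC b hb))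
    rw [← W.diffR_def] at h'
    exact (W.oInRel_oequiv hφ₁ a b l).mp h'
  have tG_C : ∀ a b (l : Fin n), a ∈ SC → b ∈ SC → G.inRel a b l → C.inRel a b l := by
    intro a b l ha hb h
    have h' := W.inRel_restrict_down G (fun x => decide (x ∉ SB)) a b l h
      (decide_eq_true (hCnB a ha)) (decide_eq_true (hCnB b hb))
    rw [← W.diffR_def] at h'
    exact (W.oInRel_oequiv hφ₂ a b l).mp h'
  have tG_D : ∀ a b (l : Fin n), a ∈ SD → b ∈ SD → G.inRel a b l → D.inRel a b l := by
    intro a b l ha hb h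
    have h' := W.inRel_restrict_down G (fun x => decide (x ∉ SF)) a b l h
      (decide_eq_true (hDnF a ha)) (decide_eq_true (hDnF b hb))
    rw [← W.diffR_def] at h'
    exact (W.oInRel_oequiv hψ₁ a b l).mp h'
  have tG_F : ∀ a b (l : Fin n), a ∈ SF → b ∈ SF → G.inRel a b l → F.inRel a b l := by
    intro a b l ha hb h
    have h' := W.inRel_restrict_down G (fun x => decide (x ∉ SD)) a b l h
      (decide_eq_true (hFnD a ha)) (decide_eq_true (hFnD b hb))
    rw [← W.diffR_def] at h'
    exact (W.oInRel_oequiv hψ₂ a b l).mp h'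
  -- existence of the shuffles
  have hne : ¬(diffR D SC = none ∧ diffR D SB = none) := by
    rintro ⟨h₁, h₃⟩
    obtain ⟨a₀, ha₀⟩ := List.exists_mem_of_ne_nil D.leaves (W.leaves_ne_nil D)
    by_cases hB' : a₀ ∈ SB
    · obtain ⟨X, hX⟩ := W.restrict_isSome D (fun x => decide (x ∉ SC)) a₀ ha₀
        (decide_eq_true (hBnC a₀ hB'))
      rw [W.diffR_def] at h₁
      rw [h₁] at hX
      exact Option.some_ne_none X hX.symm
    · obtain ⟨X, hX⟩ := W.restrict_isSome D (fun x => decide (x ∉ SB)) a₀ ha₀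
        (decide_eq_true hB')
      rw [W.diffR_def] at h₃
      rw [h₃] at hX
      exact Option.some_ne_none X hX.symm
  have hZe : ∃ Z : W n k,
      onode i (onode j (diffR D SC) (diffR F SC)) (onode j (diffR D SB) (diffR F SB))
        = some Z := by
    rw [← Option.ne_none_iff_exists']
    intro h
    rw [W.onode_eq_none_iff, W.onode_eq_none_iff, W.onode_eq_none_iff] at h
    exact hne ⟨h.1.1, h.2.1⟩
  have hZ'e : ∃ Z' : W n k,
      onode j (onode i (diffR D SC) (diffR D SB)) (onode i (diffR F SC) (diffR F SB))
        = some Z' := by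
    rw [← Option.ne_none_iff_exists']
    intro h
    rw [W.onode_eq_none_iff, W.onode_eq_none_iff, W.onode_eq_none_iff] at h
    exact hne ⟨h.1.1, h.1.2⟩
  -- descriptions of the relations of Z and Z'
  have hZiff : ∀ Z : W n k,
      onode i (onode j (diffR D SC) (diffR F SC)) (onode j (diffR D SB) (diffR F SB))
        = some Z →
      ∀ a b (l : Fin n), Z.inRel a b l ↔
        ((W.oInRel (diffR D SC) a b l ∨ W.oInRel (diffR F SC) a b l ∨
            (j = l ∧ a ∈ W.oleaves (diffR D SC) ∧ b ∈ W.oleaves (diffR F SC))) ∨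
         (W.oInRel (diffR D SB) a b l ∨ W.oInRel (diffR F SB) a b l ∨
            (j = l ∧ a ∈ W.oleaves (diffR D SB) ∧ b ∈ W.oleaves (diffR F SB))) ∨
         (i = l ∧ (a ∈ W.oleaves (diffR D SC) ∨ a ∈ W.oleaves (diffR F SC)) ∧
            (b ∈ W.oleaves (diffR D SB) ∨ b ∈ W.oleaves (diffR F SB)))) := by
    intro Z hZ a b l
    have h0 : Z.inRel a b l ↔ W.oInRel (some Z) a b l := Iff.rfl
    rw [h0, ← hZ]
    simp only [W.oInRel_onode, W.oleaves_onode, List.mem_append]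
  have hZ'iff : ∀ Z' : W n k,
      onode j (onode i (diffR D SC) (diffR D SB)) (onode i (diffR F SC) (diffR F SB))
        = some Z' →
      ∀ a b (l : Fin n), Z'.inRel a b l ↔
        ((W.oInRel (diffR D SC) a b l ∨ W.oInRel (diffR D SB) a b l ∨
            (i = l ∧ a ∈ W.oleaves (diffR D SC) ∧ b ∈ W.oleaves (diffR D SB))) ∨
         (W.oInRel (diffR F SC) a b l ∨ W.oInRel (diffR F SB) a b l ∨
            (i = l ∧ a ∈ W.oleaves (diffR F SC) ∧ b ∈ W.oleaves (diffR F SB))) ∨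
         (j = l ∧ (a ∈ W.oleaves (diffR D SC) ∨ a ∈ W.oleaves (diffR D SB)) ∧
            (b ∈ W.oleaves (diffR F SC) ∨ b ∈ W.oleaves (diffR F SB)))) := by
    intro Z' hZ' a b l
    have h0 : Z'.inRel a b l ↔ W.oInRel (some Z') a b l := Iff.rfl
    rw [h0, ← hZ']
    simp only [W.oInRel_onode, W.oleaves_onode, List.mem_append]
  refine ⟨⟨eDC, eFC, eDB, eFB⟩, ?_, ?_, ?_⟩
  · -- Z ≤ B □ᵢ C
    obtain ⟨Z, hZ⟩ := hZe
    refine ⟨Z, hZ, ?_⟩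
    intro a b hab l hrel
    rw [hZiff Z hZ a b l] at hrel
    rcases hrel with (h | h | ⟨rfl, ha, hb⟩) | (h | h | ⟨rfl, ha, hb⟩) | ⟨rfl, ha, hb⟩
    · exact ⟨l, Or.inl ⟨le_refl l, Or.inl (tDC_B a b l h)⟩⟩
    · exact ⟨l, Or.inl ⟨le_refl l, Or.inl (tFC_B a b l h)⟩⟩
    · obtain ⟨haD, haB⟩ := olDC a ha
      obtain ⟨hbF, hbB⟩ := olFC b hb
      have hdf : (W.node j D F).inRel a b j :=
        Or.inr (Or.inr ⟨rfl, (memD a).mpr haD, (memF b).mpr hbF⟩)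
      obtain ⟨m, hm⟩ := hψ a b hab j hdf
      rcases hm with ⟨hjm, hG'⟩ | ⟨hjm, hG'⟩
      · exact ⟨m, Or.inl ⟨hjm, Or.inl (tG_B a b m haB hbB hG')⟩⟩
      · exact ⟨m, Or.inr ⟨hjm, Or.inl (tG_B b a m hbB haB hG')⟩⟩
    · exact ⟨l, Or.inl ⟨le_refl l, Or.inr (Or.inl (tDB_C a b l h))⟩⟩
    · exact ⟨l, Or.inl ⟨le_refl l, Or.inr (Or.inl (tFB_C a b l h))⟩⟩
    · obtain ⟨haD, haC⟩ := olDB a ha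
      obtain ⟨hbF, hbC⟩ := olFB b hb
      have hdf : (W.node j D F).inRel a b j :=
        Or.inr (Or.inr ⟨rfl, (memD a).mpr haD, (memF b).mpr hbF⟩)
      obtain ⟨m, hm⟩ := hψ a b hab j hdf
      rcases hm with ⟨hjm, hG'⟩ | ⟨hjm, hG'⟩
      · exact ⟨m, Or.inl ⟨hjm, Or.inr (Or.inl (tG_C a b m haC hbC hG'))⟩⟩
      · exact ⟨m, Or.inr ⟨hjm, Or.inr (Or.inl (tG_C b a m hbC haC hG'))⟩⟩
    · have haB : a ∈ SB := by
        rcases ha with h | h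
        · exact (olDC a h).2
        · exact (olFC a h).2
      have hbC : b ∈ SC := by
        rcases hb with h | h
        · exact (olDB b h).2
        · exact (olFB b h).2
      exact ⟨i, Or.inl ⟨le_refl i,
        Or.inr (Or.inr ⟨rfl, (memB a).mpr haB, (memC b).mpr hbC⟩)⟩⟩
  · -- Z' ≤ D □ⱼ F
    obtain ⟨Z', hZ'⟩ := hZ'e
    refine ⟨Z', hZ', ?_⟩
    intro a b hab l hrel
    rw [hZ'iff Z' hZ' a b l] at hrel
    rcases hrel with (h | h | ⟨rfl, ha, hb⟩) | (h | h | ⟨rfl, ha, hb⟩) | ⟨rfl, ha, hb⟩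
    · exact ⟨l, Or.inl ⟨le_refl l, Or.inl (upDC a b l h)⟩⟩
    · exact ⟨l, Or.inl ⟨le_refl l, Or.inl (upDB a b l h)⟩⟩
    · obtain ⟨haD, haB⟩ := olDC a ha
      obtain ⟨hbD, hbC⟩ := olDB b hb
      have hbc : (W.node i B C).inRel a b i :=
        Or.inr (Or.inr ⟨rfl, (memB a).mpr haB, (memC b).mpr hbC⟩)
      obtain ⟨m, hm⟩ := hφ a b hab i hbc
      rcases hm with ⟨him, hG'⟩ | ⟨him, hG'⟩
      · exact ⟨m, Or.inl ⟨him, Or.inl (tG_D a b m haD hbD hG')⟩⟩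
      · exact ⟨m, Or.inr ⟨him, Or.inl (tG_D b a m hbD haD hG')⟩⟩
    · exact ⟨l, Or.inl ⟨le_refl l, Or.inr (Or.inl (upFC a b l h))⟩⟩
    · exact ⟨l, Or.inl ⟨le_refl l, Or.inr (Or.inl (upFB a b l h))⟩⟩
    · obtain ⟨haF, haB⟩ := olFC a ha
      obtain ⟨hbF, hbC⟩ := olFB b hb
      have hbc : (W.node i B C).inRel a b i :=
        Or.inr (Or.inr ⟨rfl, (memB a).mpr haB, (memC b).mpr hbC⟩)
      obtain ⟨m, hm⟩ := hφ a b hab i hbc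
      rcases hm with ⟨him, hG'⟩ | ⟨him, hG'⟩
      · exact ⟨m, Or.inl ⟨him, Or.inr (Or.inl (tG_F a b m haF hbF hG'))⟩⟩
      · exact ⟨m, Or.inr ⟨him, Or.inr (Or.inl (tG_F b a m hbF haF hG'))⟩⟩
    · have haD : a ∈ SD := by
        rcases ha with h | h
        · exact (olDC a h).1
        · exact (olDB a h).1
      have hbF : b ∈ SF := by
        rcases hb with h | h
        · exact (olFC b h).1
        · exact (olFB b h).1
      exact ⟨j, Or.inl ⟨le_refl j,
        Or.inr (Or.inr ⟨rfl, (memD a).mpr haD, (memF b).mpr hbF⟩)⟩⟩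
  · -- the commutative triangle
    intro hlt Z Z' hZ hZ'
    intro a b hab l hrel
    rw [hZiff Z hZ a b l] at hrel
    have mk := fun (x y : Fin k) (m : Fin n) => (hZ'iff Z' hZ' x y m).mpr
    rcases hrel with (h | h | ⟨rfl, ha, hb⟩) | (h | h | ⟨rfl, ha, hb⟩) | ⟨rfl, ha, hb⟩
    · exact ⟨l, Or.inl ⟨le_refl l, mk a b l (Or.inl (Or.inl h))⟩⟩
    · exact ⟨l, Or.inl ⟨le_refl l, mk a b l (Or.inr (Or.inl (Or.inl h)))⟩⟩
    · exact ⟨j, Or.inl ⟨le_refl j,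
        mk a b j (Or.inr (Or.inr ⟨rfl, Or.inl ha, Or.inl hb⟩))⟩⟩
    · exact ⟨l, Or.inl ⟨le_refl l, mk a b l (Or.inl (Or.inr (Or.inl h)))⟩⟩
    · exact ⟨l, Or.inl ⟨le_refl l, mk a b l (Or.inr (Or.inl (Or.inr (Or.inl h))))⟩⟩
    · exact ⟨j, Or.inl ⟨le_refl j,
        mk a b j (Or.inr (Or.inr ⟨rfl, Or.inr ha, Or.inr hb⟩))⟩⟩
    · rcases ha with ha | ha <;> rcases hb with hb | hb
      · exact ⟨i, Or.inl ⟨le_refl i,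
          mk a b i (Or.inl (Or.inr (Or.inr ⟨rfl, ha, hb⟩)))⟩⟩
      · exact ⟨j, Or.inl ⟨le_of_lt hlt,
          mk a b j (Or.inr (Or.inr ⟨rfl, Or.inl ha, Or.inr hb⟩))⟩⟩
      · exact ⟨j, Or.inr ⟨hlt,
          mk b a j (Or.inr (Or.inr ⟨rfl, Or.inr hb, Or.inl ha⟩))⟩⟩
      · exact ⟨i, Or.inl ⟨le_refl i,
          mk a b i (Or.inr (Or.inl (Or.inr (Or.inr ⟨rfl, ha, hb⟩))))⟩⟩
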